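/- Let N be a positive integer. Then the group Γ₀(N) is generated by its elements of the form (a b; Nc d) with gcd(a, 6) = 1, a ≥ 0 and c ≥ 0; that is, the subgroup of SL₂(ℤ) generated by { (a b; Nc d) ∈ Γ₀(N) : gcd(a,6) = 1, a ≥ 0, c ≥ 0 } equals Γ₀(N). -/

import Mathlib

open CongruenceSubgroup

private lemma zmod6_key : ∀ x y u v : ZMod 6, u*x+v*y = 1 →
    ∃ k z : ZMod 6, (x+k*y)*z = 1 := by decide

private lemma gcd_six_exists (a c : ℤ) (h : IsCoprime a c) (hc : 0 < c) :
    ∃ k : ℤ, Int.gcd (a + k * c) 6 = 1 ∧ 0 ≤ a + k * c := by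
  obtain ⟨u, v, huv⟩ := h
  have huv6 : (u : ZMod 6) * (a : ZMod 6) + (v : ZMod 6) * (c : ZMod 6) = 1 := by
    have := congrArg (fun t : ℤ => (t : ZMod 6)) huv
    push_cast at this
    simpa using this
  obtain ⟨k, z, hkz⟩ := zmod6_key (a : ZMod 6) (c : ZMod 6) _ _ huv6
  set k' : ℤ := (k.val : ℤ)
  have hcast : ((a + k' * c : ℤ) : ZMod 6) = (a : ZMod 6) + k * (c : ZMod 6) := by
    push_cast [k']
    simp [ZMod.natCast_val, ZMod.intCast_cast]
  -- coprimality of a + k' * c with 6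
  have hcop : IsCoprime (a + k' * c) 6 := by
    obtain ⟨z', hz'⟩ := ZMod.intCast_surjective (n := 6) z
    have : (((a + k' * c) * z' - 1 : ℤ) : ZMod 6) = 0 := by
      rw [Int.cast_sub, Int.cast_mul, Int.cast_one, hcast, hz', hkz, sub_self]
    obtain ⟨t, ht⟩ := (ZMod.intCast_zmod_eq_zero_iff_dvd _ 6).mp this
    exact ⟨z', -t, by push_cast at ht ⊢; linarith⟩
  -- now shift by a multiple of 6 to get nonnegativity
  set n : ℤ := ((a + k' * c).natAbs : ℤ)
  refine ⟨k' + 6 * n, ?_, ?_⟩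
  · rw [← Int.isCoprime_iff_gcd_eq_one]
    have : a + (k' + 6 * n) * c = (a + k' * c) + (n * c) * 6 := by ring
    rw [this]
    exact hcop.add_mul_right_left (n * c)
  · have h1 : -(n : ℤ) ≤ a + k' * c := by
      have h := neg_abs_le (a + k' * c)
      rw [Int.abs_eq_natAbs] at h
      exact h
    have h2 : 0 ≤ (n : ℤ) := by positivity
    nlinarith [mul_le_mul_of_nonneg_left hc.le (by positivity : (0:ℤ) ≤ 6 * n)]

/-- for `N > 0`, the group `Γ₀(N)` is generated by its elements
`(a b; Nc d)` with `gcd(a,6) = 1`, `a ≥ 0` and `c ≥ 0` (the lower-left entry of an element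
of `Γ₀(N)` is automatically of the form `Nc`, and `c ≥ 0` is equivalent to the entry being
nonnegative). -/
theorem Gamma0_generated_by_gcd_six_one (N : ℕ) (hN : 0 < N) :
    Subgroup.closure {γ : Matrix.SpecialLinearGroup (Fin 2) ℤ |
        γ ∈ Gamma0 N ∧ Int.gcd (γ 0 0) 6 = 1 ∧ 0 ≤ γ 0 0 ∧ 0 ≤ γ 1 0} = Gamma0 N := by
  set S : Set (Matrix.SpecialLinearGroup (Fin 2) ℤ) :=
    {γ : Matrix.SpecialLinearGroup (Fin 2) ℤ |
        γ ∈ Gamma0 N ∧ Int.gcd (γ 0 0) 6 = 1 ∧ 0 ≤ γ 0 0 ∧ 0 ≤ γ 1 0} with hS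
  apply le_antisymm
  · exact (Subgroup.closure_le _).2 fun γ hγ => hγ.1
  -- T is a generator
  have hT : ModularGroup.T ∈ Subgroup.closure S := by
    apply Subgroup.subset_closure
    refine ⟨?_, ?_, ?_, ?_⟩ <;>
      simp [Gamma0_mem, ModularGroup.coe_T]
  -- -1 is in the closure
  have hneg : (-1 : Matrix.SpecialLinearGroup (Fin 2) ℤ) ∈ Subgroup.closure S := by
    have hdetu : Matrix.det !![(1:ℤ), -1; (6*N:ℤ), 1-6*N] = 1 := by
      simp [Matrix.det_fin_two_of]; try ring
    have hdetv : Matrix.det !![(6*N-1:ℤ), -1; (6*N:ℤ), -1] = 1 := by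
      simp [Matrix.det_fin_two_of]; try ring
    set u : Matrix.SpecialLinearGroup (Fin 2) ℤ := ⟨_, hdetu⟩
    set v : Matrix.SpecialLinearGroup (Fin 2) ℤ := ⟨_, hdetv⟩
    have huS : u ∈ S := by
      refine ⟨by rw [Gamma0_mem]; simp [u], ?_, ?_, ?_⟩ <;> simp [u, Gamma0_mem]
    have hvS : v ∈ S := by
      refine ⟨?_, ?_, ?_, ?_⟩
      · rw [Gamma0_mem]; simp [v]
      · show Int.gcd (6*(N:ℤ)-1) 6 = 1
        rw [← Int.isCoprime_iff_gcd_eq_one]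
        exact ⟨-1, N, by ring⟩
      · show (0:ℤ) ≤ 6*(N:ℤ)-1
        have : (1:ℤ) ≤ N := by exact_mod_cast hN
        linarith
      · show (0:ℤ) ≤ 6*(N:ℤ)
        positivity
    have huv : (-1 : Matrix.SpecialLinearGroup (Fin 2) ℤ) = u * v := by
      ext i j
      rw [Matrix.SpecialLinearGroup.coe_mul]
      simp only [u, v]
      fin_cases i <;> fin_cases j <;>
        simp [Matrix.mul_apply, Fin.sum_univ_two] <;> ring
    rw [huv]
    exact mul_mem (Subgroup.subset_closure huS) (Subgroup.subset_closure hvS)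
  -- main positive-c case
  have hpos : ∀ γ : Matrix.SpecialLinearGroup (Fin 2) ℤ, γ ∈ Gamma0 N →
      0 < γ 1 0 → γ ∈ Subgroup.closure S := by
    intro γ hγ hc
    have hdet : γ 0 0 * γ 1 1 - γ 0 1 * γ 1 0 = 1 := by
      have := γ.2
      rwa [Matrix.det_fin_two] at this
    have hcop : IsCoprime (γ 0 0) (γ 1 0) :=
      ⟨γ 1 1, -(γ 0 1), by linarith [hdet]⟩
    obtain ⟨k, hk1, hk2⟩ := gcd_six_exists (γ 0 0) (γ 1 0) hcop hc
    have hentry : ∀ j, (ModularGroup.T ^ k * γ) 0 j = γ 0 j + k * γ 1 j := by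
      intro j
      show ((ModularGroup.T ^ k * γ : Matrix.SpecialLinearGroup (Fin 2) ℤ) :
        Matrix (Fin 2) (Fin 2) ℤ) 0 j = _
      rw [Matrix.SpecialLinearGroup.coe_mul, ModularGroup.coe_T_zpow]
      simp [Matrix.mul_apply, Fin.sum_univ_two]
    have hentry1 : ∀ j, (ModularGroup.T ^ k * γ) 1 j = γ 1 j := by
      intro j
      show ((ModularGroup.T ^ k * γ : Matrix.SpecialLinearGroup (Fin 2) ℤ) :
        Matrix (Fin 2) (Fin 2) ℤ) 1 j = _
      rw [Matrix.SpecialLinearGroup.coe_mul, ModularGroup.coe_T_zpow]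
      simp [Matrix.mul_apply, Fin.sum_univ_two]
    have hmemS : ModularGroup.T ^ k * γ ∈ S := by
      refine ⟨?_, ?_, ?_, ?_⟩
      · rw [Gamma0_mem, hentry1 0]
        exact Gamma0_mem.mp hγ
      · rw [hentry 0]
        exact hk1
      · rw [hentry 0]
        exact hk2
      · rw [hentry1 0]; exact hc.le
    have : γ = ModularGroup.T ^ (-k) * (ModularGroup.T ^ k * γ) := by
      rw [← mul_assoc, ← zpow_add]
      simp
    rw [this]
    exact mul_mem (zpow_mem hT _) (Subgroup.subset_closure hmemS)
  -- put it all together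
  intro γ hγ
  rcases lt_trichotomy (γ 1 0) 0 with hc | hc | hc
  · have hmem : (-1) * γ ∈ Gamma0 N := by
      rw [Gamma0_mem]
      have : ((-1) * γ) 1 0 = -(γ 1 0) := by
        show ((((-1) * γ : Matrix.SpecialLinearGroup (Fin 2) ℤ)) :
          Matrix (Fin 2) (Fin 2) ℤ) 1 0 = _
        rw [Matrix.SpecialLinearGroup.coe_mul]
        simp
      rw [this]
      push_cast
      simp [Gamma0_mem.mp hγ]
    have hcpos : 0 < ((-1) * γ) 1 0 := by
      have : ((-1) * γ) 1 0 = -(γ 1 0) := by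
        show ((((-1) * γ : Matrix.SpecialLinearGroup (Fin 2) ℤ)) :
          Matrix (Fin 2) (Fin 2) ℤ) 1 0 = _
        rw [Matrix.SpecialLinearGroup.coe_mul]
        simp
      rw [this]; linarith
    have : γ = (-1) * ((-1) * γ) := by
      rw [← mul_assoc]; simp
    rw [this]
    exact mul_mem hneg (hpos _ hmem hcpos)
  · -- c = 0 case
    have hdet : γ 0 0 * γ 1 1 - γ 0 1 * γ 1 0 = 1 := by
      have := γ.2
      rwa [Matrix.det_fin_two] at this
    rw [hc] at hdet
    have had : γ 0 0 * γ 1 1 = 1 := by linarith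
    rcases Int.isUnit_iff.mp (IsUnit.of_mul_eq_one _ had) with ha | ha
    · have hd : γ 1 1 = 1 := by
        rw [ha] at had; linarith
      have hγeq : γ = ModularGroup.T ^ (γ 0 1) := by
        ext i j
        rw [ModularGroup.coe_T_zpow]
        fin_cases i <;> fin_cases j <;> simp [ha, hd, hc]
      rw [hγeq]
      exact zpow_mem hT _
    · have hd : γ 1 1 = -1 := by
        rw [ha] at had; linarith
      have hγeq : γ = (-1) * ModularGroup.T ^ (-(γ 0 1)) := by
        ext i j
        rw [Matrix.SpecialLinearGroup.coe_mul, ModularGroup.coe_T_zpow]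
        fin_cases i <;> fin_cases j <;>
          simp [ha, hd, hc, Matrix.mul_apply, Fin.sum_univ_two]
      rw [hγeq]
      exact mul_mem hneg (zpow_mem hT _)
  · exact hpos γ hγ hc
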